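/- Let y ∈ ℂ with e^y ≠ 1. Then, as the real parameter c tends to 1 (through real values c ≠ 1), the expression (1/(1−c)) · ( 1/(e^y − 1) − c/(e^{cy} − 1) ) tends to 1/(e^y − 1) − y·e^y/(e^y − 1)^2. That is, lim_{c→1, c∈ℝ∖{1}} F_{c,1}(y,1) = F_{1,1}(y,1). (Lemma 3.5.) -/

import Mathlib

open Complex Filter Topology

/-- Lemma 3.5: for `y ∈ ℂ` with `e^y ≠ 1`, as the real parameter `c → 1`
(`c ≠ 1`), `(1/(1-c)) (1/(e^y - 1) - c/(e^{cy} - 1))` tends to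
`1/(e^y - 1) - y e^y/(e^y - 1)^2`. -/
theorem tendsto_F_c_one (y : ℂ) (hy : Complex.exp y ≠ 1) :
    Tendsto
      (fun c : ℝ =>
        (1 / (1 - (c : ℂ))) *
          (1 / (Complex.exp y - 1) - (c : ℂ) / (Complex.exp ((c : ℂ) * y) - 1)))
      (𝓝[≠] (1 : ℝ))
      (𝓝 (1 / (Complex.exp y - 1) -
        y * Complex.exp y / (Complex.exp y - 1) ^ 2)) := by
  have hne : Complex.exp y - 1 ≠ 0 := sub_ne_zero.mpr hy
  set f : ℝ → ℂ := fun c => (c : ℂ) / (Complex.exp ((c : ℂ) * y) - 1) with hf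
  have h1 : HasDerivAt (fun c : ℝ => (c : ℂ)) 1 1 := by
    simpa using (hasDerivAt_id (1 : ℝ)).ofReal_comp
  have h2 : HasDerivAt (fun c : ℝ => (c : ℂ) * y) y 1 := by
    simpa using h1.mul_const y
  have h3 : HasDerivAt (fun c : ℝ => Complex.exp ((c : ℂ) * y) - 1)
      (Complex.exp (((1 : ℝ) : ℂ) * y) * y) 1 := (h2.cexp).sub_const 1
  have hden : Complex.exp (((1 : ℝ) : ℂ) * y) - 1 ≠ 0 := by
    simpa using hne
  have hD : HasDerivAt f
      ((1 * (Complex.exp (((1 : ℝ) : ℂ) * y) - 1) -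
        ((1 : ℝ) : ℂ) * (Complex.exp (((1 : ℝ) : ℂ) * y) * y)) /
        (Complex.exp (((1 : ℝ) : ℂ) * y) - 1) ^ 2) 1 := h1.div h3 hden
  have hDval : ((1 * (Complex.exp (((1 : ℝ) : ℂ) * y) - 1) -
        ((1 : ℝ) : ℂ) * (Complex.exp (((1 : ℝ) : ℂ) * y) * y)) /
        (Complex.exp (((1 : ℝ) : ℂ) * y) - 1) ^ 2) =
      1 / (Complex.exp y - 1) - y * Complex.exp y / (Complex.exp y - 1) ^ 2 := by
    simp only [Complex.ofReal_one, one_mul]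
    field_simp
  rw [hDval] at hD
  have hslope := hasDerivAt_iff_tendsto_slope.mp hD
  refine hslope.congr' ?_
  filter_upwards [self_mem_nhdsWithin] with c (hc : c ≠ 1)
  have hc' : ((c : ℂ) - 1) ≠ 0 := by
    simpa [sub_eq_zero] using fun h => hc (by exact_mod_cast h)
  have hf1 : f 1 = 1 / (Complex.exp y - 1) := by simp [hf]
  have h1c : (1 - (c : ℂ)) ≠ 0 := by
    rw [← neg_sub]; exact neg_ne_zero.mpr hc'
  have hsl : slope f 1 c = ((c : ℂ) - 1)⁻¹ * (f c - f 1) := by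
    rw [slope]
    rw [Complex.real_smul]
    push_cast
    simp [vsub_eq_sub]
  rw [hsl, hf1]
  set z := f c with hz
  field_simp
  ring
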